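/- Let A be a Z-graded commutative ring and S a multiplicative set of homogeneous elements. If A is good (respectively quasi-standard, standard, quasi-trivial, trivial), then the graded localization S^{-1}A has the same property. -/

import Mathlib

/-- The degree-`d` part of the graded localization `S⁻¹A`: fractions `a/s` with `a` and `s`
homogeneous and `deg a - deg s = d`. -/
def LocGrade {A σ : Type*} [CommRing A] [SetLike σ A] (𝒜 : ℤ → σ) (S : Submonoid A)
    (d : ℤ) : Set (Localization S) :=
  {x | ∃ (a : A) (s : S) (i : ℤ), a ∈ 𝒜 (d + i) ∧ (s : A) ∈ 𝒜 i ∧ x = Localization.mk a s}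

/-- An ideal of the graded localization is homogeneous if it is generated by its
homogeneous elements. -/
def LocIsHomogeneous {A σ : Type*} [CommRing A] [SetLike σ A] (𝒜 : ℤ → σ) (S : Submonoid A)
    (Q : Ideal (Localization S)) : Prop :=
  Q = Ideal.span {x | (∃ d : ℤ, x ∈ LocGrade 𝒜 S d) ∧ x ∈ Q}

/-- The graded localization `S⁻¹A` is good: homogeneous primes are determined by their
degree-zero parts. -/
def LocGood {A σ : Type*} [CommRing A] [SetLike σ A] (𝒜 : ℤ → σ) (S : Submonoid A) : Prop :=
  ∀ Q Q' : Ideal (Localization S), Q.IsPrime → Q'.IsPrime →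
    LocIsHomogeneous 𝒜 S Q → LocIsHomogeneous 𝒜 S Q' →
    (∀ x ∈ LocGrade 𝒜 S 0, (x ∈ Q ↔ x ∈ Q')) → Q = Q'

/-- The graded localization `S⁻¹A` is quasi-standard: it contains an invertible
homogeneous element of positive degree. -/
def LocQuasiStandard {A σ : Type*} [CommRing A] [SetLike σ A] (𝒜 : ℤ → σ)
    (S : Submonoid A) : Prop :=
  ∃ d : ℤ, 0 < d ∧ ∃ x ∈ LocGrade 𝒜 S d, IsUnit x

/-- The graded localization `S⁻¹A` is standard: it contains an invertible element of
degree `1`. -/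
def LocStandard {A σ : Type*} [CommRing A] [SetLike σ A] (𝒜 : ℤ → σ)
    (S : Submonoid A) : Prop :=
  ∃ x ∈ LocGrade 𝒜 S 1, IsUnit x

/-- The graded localization `S⁻¹A` is quasi-trivial: every homogeneous element of nonzero
degree is nilpotent. -/
def LocQuasiTrivial {A σ : Type*} [CommRing A] [SetLike σ A] (𝒜 : ℤ → σ)
    (S : Submonoid A) : Prop :=
  ∀ d : ℤ, d ≠ 0 → ∀ x ∈ LocGrade 𝒜 S d, IsNilpotent x

/-- The graded localization `S⁻¹A` is trivial: every homogeneous element of nonzero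
degree is zero. -/
def LocTrivial {A σ : Type*} [CommRing A] [SetLike σ A] (𝒜 : ℤ → σ)
    (S : Submonoid A) : Prop :=
  ∀ d : ℤ, d ≠ 0 → ∀ x ∈ LocGrade 𝒜 S d, x = 0


section Aux

variable {A : Type*} [CommRing A] (S : Submonoid A)

lemma Loc.mk_split (a : A) (s : S) :
    Localization.mk a s = algebraMap A (Localization S) a * Localization.mk 1 s := by
  rw [← Localization.mk_one_eq_algebraMap, Localization.mk_mul, mul_one, one_mul]

lemma Loc.mk_mul_den (a : A) (s : S) :
    Localization.mk a s * algebraMap A (Localization S) (s : A)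
      = algebraMap A (Localization S) a := by
  rw [← Localization.mk_one_eq_algebraMap (s : A), Localization.mk_mul, mul_one,
    ← Localization.mk_one_eq_algebraMap a, Localization.mk_eq_mk_iff]
  exact Localization.r_of_eq (by simp [mul_comm])

end Aux

/-- Graded localization at a homogeneous multiplicative system preserves
the properties good / quasi-standard / standard / quasi-trivial / trivial. -/
theorem stmt_8 {A : Type*} [CommRing A] (𝒜 : ℤ → AddSubgroup A) [GradedRing 𝒜]
    (S : Submonoid A) (h0 : (0 : A) ∉ S) (hhom : ∀ s ∈ S, ∃ d : ℤ, s ∈ 𝒜 d) :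
    ((∀ p q : Ideal A, p.IsPrime → q.IsPrime → p.IsHomogeneous 𝒜 → q.IsHomogeneous 𝒜 →
        (∀ a ∈ 𝒜 0, (a ∈ p ↔ a ∈ q)) → p = q) → LocGood 𝒜 S) ∧
    ((∃ d : ℤ, 0 < d ∧ ∃ a ∈ 𝒜 d, IsUnit a) → LocQuasiStandard 𝒜 S) ∧
    ((∃ a ∈ 𝒜 1, IsUnit a) → LocStandard 𝒜 S) ∧
    ((∀ d : ℤ, d ≠ 0 → ∀ a ∈ 𝒜 d, IsNilpotent a) → LocQuasiTrivial 𝒜 S) ∧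
    ((∀ d : ℤ, d ≠ 0 → ∀ a ∈ 𝒜 d, a = 0) → LocTrivial 𝒜 S) := by
    classical
  set f := algebraMap A (Localization S) with hfdef
  have oneS : ((1 : S) : A) ∈ 𝒜 0 := by
    simpa using (SetLike.one_mem_graded 𝒜 : (1 : A) ∈ 𝒜 0)
  -- membership of algebraMap images in LocGrade
  have hmemgrade : ∀ (d : ℤ) (a : A), a ∈ 𝒜 d → f a ∈ LocGrade 𝒜 S d := by
    intro d a ha
    exact ⟨a, 1, 0, by simpa using ha, oneS, (Localization.mk_one_eq_algebraMap a).symm⟩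
  -- key: a homogeneous ideal with smaller comap is smaller
  have hkey : ∀ (R R' : Ideal (Localization S)), LocIsHomogeneous 𝒜 S R →
      R.comap f ≤ R'.comap f → R ≤ R' := by
    intro R R' hRh hcom
    conv_lhs => rw [hRh]
    refine Ideal.span_le.mpr ?_
    rintro x ⟨⟨d, a, s, i, ha, hs, rfl⟩, hxR⟩
    have h1 : f a ∈ R := by
      rw [← Loc.mk_mul_den S a s]; exact R.mul_mem_right _ hxR
    have h2 : f a ∈ R' := hcom h1
    rw [Loc.mk_split S a s]
    exact R'.mul_mem_right _ h2
  -- comap of a homogeneous ideal is homogeneous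
  have hcomapHom : ∀ Q : Ideal (Localization S), LocIsHomogeneous 𝒜 S Q →
      (Q.comap f).IsHomogeneous 𝒜 := by
    intro Q hQh
    set B : Set A := {b | SetLike.IsHomogeneousElem 𝒜 b ∧ f b ∈ Q} with hB
    set I : Ideal A := Ideal.span B with hI
    have hIhom : I.IsHomogeneous 𝒜 := Ideal.homogeneous_span 𝒜 B fun b hb => hb.1
    have hmapI : Ideal.map f I ≤ Q :=
      Ideal.map_le_iff_le_comap.mpr (Ideal.span_le.mpr fun b hb => hb.2)
    have hQmap : Q ≤ Ideal.map f I := by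
      conv_lhs => rw [hQh]
      refine Ideal.span_le.mpr ?_
      rintro x ⟨⟨d, a, s, i, ha, hs, rfl⟩, hxQ⟩
      have hfa : f a ∈ Q := by
        rw [← Loc.mk_mul_den S a s]; exact Q.mul_mem_right _ hxQ
      have haB : a ∈ B := ⟨⟨d + i, ha⟩, hfa⟩
      have hmm : f a ∈ Ideal.map f I := Ideal.mem_map_of_mem f (Ideal.subset_span haB)
      rw [Loc.mk_split S a s]
      exact Ideal.mul_mem_right _ _ hmm
    intro d a ha
    rw [Ideal.mem_comap] at ha
    have hfa : f a ∈ Ideal.map f I := hQmap ha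
    obtain ⟨⟨⟨b, hbI⟩, u⟩, h⟩ :=
      (IsLocalization.mem_map_algebraMap_iff S (Localization S)).mp hfa
    rw [← map_mul] at h
    obtain ⟨c, hc⟩ := (IsLocalization.eq_iff_exists S (Localization S)).mp h
    have hmem : ((c : A) * u) * a ∈ I := by
      have hcb : (c : A) * b ∈ I := I.mul_mem_left _ hbI
      rw [← hc] at hcb
      have : (c : A) * (a * u) = ((c : A) * u) * a := by ring
      rwa [this] at hcb
    have hmS : ((c : A) * (u : A)) ∈ S := S.mul_mem c.2 u.2
    obtain ⟨e, he⟩ := hhom _ hmS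
    have hd' : ((c : A) * u) * (DirectSum.decompose 𝒜 a d : A) ∈ I := by
      have := hIhom (e + d) hmem
      rwa [DirectSum.coe_decompose_mul_add_of_left_mem 𝒜 he] at this
    rw [Ideal.mem_comap]
    have hfd : f ((c : A) * u) * f (DirectSum.decompose 𝒜 a d : A) ∈ Q := by
      have := hmapI (Ideal.mem_map_of_mem f hd')
      rwa [map_mul] at this
    obtain ⟨v, hv⟩ := (IsLocalization.map_units (Localization S) ⟨_, hmS⟩ :
      IsUnit (f ((c : A) * u)))
    have : (↑v⁻¹ : Localization S) * (f ((c : A) * u) * f (DirectSum.decompose 𝒜 a d : A)) ∈ Q :=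
      Q.mul_mem_left _ hfd
    rwa [← hv, ← mul_assoc, Units.inv_mul, one_mul] at this
  refine ⟨?_, ?_, ?_, ?_, ?_⟩
  · -- good
    intro hA Q Q' hQp hQ'p hQh hQ'h hagree
    have hp : (Q.comap f).IsPrime := hQp.comap f
    have hp' : (Q'.comap f).IsPrime := hQ'p.comap f
    have h00 : ∀ a ∈ 𝒜 0, (a ∈ Q.comap f ↔ a ∈ Q'.comap f) := by
      intro a ha
      exact hagree (f a) (hmemgrade 0 a ha)
    have hpp : Q.comap f = Q'.comap f :=
      hA _ _ hp hp' (hcomapHom Q hQh) (hcomapHom Q' hQ'h) h00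
    exact le_antisymm (hkey Q Q' hQh hpp.le) (hkey Q' Q hQ'h hpp.ge)
  · -- quasi-standard
    rintro ⟨d, hd, a, ha, hu⟩
    exact ⟨d, hd, f a, hmemgrade d a ha, hu.map f⟩
  · -- standard
    rintro ⟨a, ha, hu⟩
    exact ⟨f a, hmemgrade 1 a ha, hu.map f⟩
  · -- quasi-trivial
    rintro hqt d hd x ⟨a, s, i, ha, hs, rfl⟩
    by_cases hdi : d + i = 0
    · exfalso
      obtain ⟨n, hn⟩ := hqt i (by omega) (s : A) hs
      exact h0 (hn ▸ pow_mem s.2 n)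
    · obtain ⟨n, hn⟩ := hqt (d + i) hdi a ha
      exact ⟨n, by rw [Localization.mk_pow, hn, Localization.mk_zero]⟩
  · -- trivial
    rintro ht d hd x ⟨a, s, i, ha, hs, rfl⟩
    by_cases hdi : d + i = 0
    · exfalso
      have := ht i (by omega) (s : A) hs
      exact h0 (this ▸ s.2)
    · rw [ht (d + i) hdi a ha, Localization.mk_zero]
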